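/- arXiv:1504.02602 — 9 statements merged into one kernel-verified Lean document; each statement's English description precedes it below -/
import Mathlib

section
/- Let g, h ∈ ℝ^n be vectors with all finite entries and g ≤ h componentwise. Then a vector x ∈ ℝ^n satisfies α + g ≤ x ≤ α + h (componentwise, for some real α) if and only if there exists u ∈ ℝ^n such that x_i = max(u_i, max_j (g_i - h_j + u_j)) for all i. -/
/-- Representation lemma in max-plus: for finite vectors `g ≤ h`, a vector `x` satisfies
`α + g ≤ x ≤ α + h` for some real `α` iff `x = (I ⊕ g h⁻) u` for some regular `u`, i.e.
`x i = max (u i) (max_j (g i - h j + u j))`. -/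
theorem maxplus_representation_lemma (n : ℕ) (hn : 0 < n) (g h : Fin n → ℝ)
    (hgh : ∀ i, g i ≤ h i) (x : Fin n → ℝ) :
    (∃ α : ℝ, ∀ i, α + g i ≤ x i ∧ x i ≤ α + h i) ↔
      (∃ u : Fin n → ℝ, ∀ i, x i =
        max (u i) (Finset.univ.sup'
          (by simpa [Finset.univ_nonempty_iff] using Fin.pos_iff_nonempty.mp hn)
          (fun j => g i - h j + u j))) := by
  have hne : (Finset.univ : Finset (Fin n)).Nonempty := by
    simpa [Finset.univ_nonempty_iff] using Fin.pos_iff_nonempty.mp hn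
  constructor
  · rintro ⟨α, hα⟩
    refine ⟨x, fun i => ?_⟩
    have hsup : (Finset.univ.sup' hne fun j => g i - h j + x j) ≤ x i := by
      apply Finset.sup'_le
      intro j _
      have h1 : x j ≤ α + h j := (hα j).2
      have h2 : α + g i ≤ x i := (hα i).1
      linarith
    symm
    exact max_eq_left hsup
  · rintro ⟨u, hu⟩
    refine ⟨Finset.univ.sup' hne fun j => u j - h j, fun i => ?_⟩
    set α := Finset.univ.sup' hne fun j => u j - h j with hαdef
    constructor
    · rw [hu i]
      refine le_trans ?_ (le_max_right _ _)
      obtain ⟨j, -, hj⟩ := Finset.exists_mem_eq_sup' hne (fun j => u j - h j)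
      have : g i - h j + u j ≤ Finset.univ.sup' hne fun j => g i - h j + u j :=
        Finset.le_sup' (fun j => g i - h j + u j) (Finset.mem_univ j)
      rw [hαdef, hj]; linarith
    · rw [hu i]
      apply max_le
      · have : u i - h i ≤ α := Finset.le_sup' (fun j => u j - h j) (Finset.mem_univ i)
        linarith
      · apply Finset.sup'_le
        intro j _
        have h1 : u j - h j ≤ α := Finset.le_sup' (fun j => u j - h j) (Finset.mem_univ j)
        have h2 := hgh i
        linarith
end

section
/- Let A be an m×n matrix over ℝ ∪ {-∞} with each row containing at least one finite entry, p ∈ (ℝ ∪ {-∞})^m a vector with at least one finite entry, and q ∈ ℝ^n a vector with all finite entries. Then for every vector x ∈ ℝ^n, the quantity max_j(x_j - q_j) + max_i(p_i - max_j(a_{ij} + x_j)) is at least Δ = max_i (p_i - max_j (a_{ij} + q_j)). -/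
/-- The max-plus objective `q⁻ x (A x)⁻ p`. -/
noncomputable def tropObj (m n : ℕ) (a : Matrix (Fin m) (Fin n) EReal)
    (p : Fin m → EReal) (q x : Fin n → ℝ) : EReal :=
  (⨆ j, ((x j - q j : ℝ) : EReal)) +
    ⨆ i, (p i - ⨆ j, (a i j + ((x j : ℝ) : EReal)))

/-- The minimum value `Δ = (A q)⁻ p`. -/
noncomputable def tropDelta (m n : ℕ) (a : Matrix (Fin m) (Fin n) EReal)
    (p : Fin m → EReal) (q : Fin n → ℝ) : EReal :=
  ⨆ i, (p i - ⨆ j, (a i j + ((q j : ℝ) : EReal)))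

theorem tropObj_lower_bound_aux (m n : ℕ) (a : Matrix (Fin m) (Fin n) EReal)
    (hatop : ∀ i j, a i j ≠ ⊤) (harow : ∀ i, ∃ j, a i j ≠ ⊥)
    (p : Fin m → EReal) (hptop : ∀ i, p i ≠ ⊤) (hp : ∃ i, p i ≠ ⊥)
    (q : Fin n → ℝ) (x : Fin n → ℝ) :
    (⨆ i, (p i - ⨆ j, (a i j + ((q j : ℝ) : EReal)))) ≤
    (⨆ j, ((x j - q j : ℝ) : EReal)) +
    ⨆ i, (p i - ⨆ j, (a i j + ((x j : ℝ) : EReal))) := by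
  obtain ⟨i0, -⟩ := hp
  obtain ⟨j0, -⟩ := harow i0
  have hn : Nonempty (Fin n) := ⟨j0⟩
  obtain ⟨j1, hj1⟩ := Finite.exists_max (fun j => x j - q j)
  have hs : (⨆ j, ((x j - q j : ℝ) : EReal)) = ((x j1 - q j1 : ℝ) : EReal) := by
    apply le_antisymm
    · exact iSup_le fun j => by exact_mod_cast hj1 j
    · exact le_iSup (fun j => ((x j - q j : ℝ) : EReal)) j1
  rw [hs]
  refine iSup_le fun i => ?_
  have step : p i - (⨆ j, (a i j + ((q j : ℝ) : EReal))) ≤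
      ((x j1 - q j1 : ℝ) : EReal) + (p i - ⨆ j, (a i j + ((x j : ℝ) : EReal))) := by
    rcases eq_or_ne (p i) ⊥ with hpb | hpb
    · rw [hpb, EReal.bot_sub]; exact bot_le
    · lift p i to ℝ using ⟨hptop i, hpb⟩ with pr hpr
      obtain ⟨j2, hj2⟩ := harow i
      lift a i j2 to ℝ using ⟨hatop i j2, hj2⟩ with a2 ha2
      obtain ⟨jB, hjB⟩ := Finite.exists_max (fun j => a i j + ((q j : ℝ) : EReal))
      have haBbot : a i jB ≠ ⊥ := by
        intro h
        have h2 := hjB j2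
        rw [h, EReal.bot_add, le_bot_iff, ← ha2, ← EReal.coe_add] at h2
        exact EReal.coe_ne_bot _ h2
      lift a i jB to ℝ using ⟨hatop i jB, haBbot⟩ with aB haB
      have hBeq : (⨆ j, (a i j + ((q j : ℝ) : EReal))) = ((aB + q jB : ℝ) : EReal) := by
        apply le_antisymm
        · exact iSup_le fun j => by rw [EReal.coe_add]; exact hjB j
        · have := le_iSup (fun j => a i j + ((q j : ℝ) : EReal)) jB
          rwa [← haB, ← EReal.coe_add] at this
      obtain ⟨jC, hjC⟩ := Finite.exists_max (fun j => a i j + ((x j : ℝ) : EReal))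
      have haCbot : a i jC ≠ ⊥ := by
        intro h
        have h2 := hjC j2
        rw [h, EReal.bot_add, le_bot_iff, ← ha2, ← EReal.coe_add] at h2
        exact EReal.coe_ne_bot _ h2
      lift a i jC to ℝ using ⟨hatop i jC, haCbot⟩ with aC haC
      have hCeq : (⨆ j, (a i j + ((x j : ℝ) : EReal))) = ((aC + x jC : ℝ) : EReal) := by
        apply le_antisymm
        · exact iSup_le fun j => by rw [EReal.coe_add]; exact hjC j
        · have := le_iSup (fun j => a i j + ((x j : ℝ) : EReal)) jC
          rwa [← haC, ← EReal.coe_add] at this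
      have hge : aC + q jC ≤ aB + q jB := by
        have h2 := hjB jC
        rw [← haC] at h2
        exact_mod_cast h2
      have hsle : x jC - q jC ≤ x j1 - q j1 := hj1 jC
      rw [hBeq, hCeq,
        show ((pr : ℝ) : EReal) - ((aB + q jB : ℝ) : EReal)
          = ((pr - (aB + q jB) : ℝ) : EReal) by norm_cast,
        show ((pr : ℝ) : EReal) - ((aC + x jC : ℝ) : EReal)
          = ((pr - (aC + x jC) : ℝ) : EReal) by norm_cast,
        ← EReal.coe_add]
      exact_mod_cast (by linarith :
        pr - (aB + q jB) ≤ (x j1 - q j1) + (pr - (aC + x jC)))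
  refine step.trans (add_le_add_right ?_ _)
  exact le_iSup (fun i => p i - ⨆ j, (a i j + ((x j : ℝ) : EReal))) i

/-- Lower bound: for row-regular `A`, nonzero `p` and regular `q`, the objective
`q⁻ x (A x)⁻ p` is at least `Δ = (A q)⁻ p` for every regular vector `x`. -/
theorem tropObj_lower_bound (m n : ℕ) (a : Matrix (Fin m) (Fin n) EReal)
    (hatop : ∀ i j, a i j ≠ ⊤) (harow : ∀ i, ∃ j, a i j ≠ ⊥)
    (p : Fin m → EReal) (hptop : ∀ i, p i ≠ ⊤) (hp : ∃ i, p i ≠ ⊥)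
    (q : Fin n → ℝ) (x : Fin n → ℝ) :
    tropDelta m n a p q ≤ tropObj m n a p q x := by
  unfold tropDelta tropObj
  exact tropObj_lower_bound_aux m n a hatop harow p hptop hp q x
end

section
/- Let A be an m×n matrix over ℝ ∪ {-∞} with each row containing at least one finite entry, p ∈ (ℝ ∪ {-∞})^m with at least one finite entry, and q ∈ ℝ^n all finite. Then the vector x = q achieves the value Δ = max_i (p_i - max_j (a_{ij} + q_j)) for the objective function f(x) = max_j(x_j - q_j) + max_i(p_i - max_j(a_{ij} + x_j)); consequently Δ is the minimum value of f over all x ∈ ℝ^n. -/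
private lemma trop_key {n : ℕ} [Nonempty (Fin n)] (a : Fin n → EReal)
    (hatop : ∀ j, a j ≠ ⊤) (hrow : ∃ j, a j ≠ ⊥) (p : EReal) (hptop : p ≠ ⊤)
    (q x : Fin n → ℝ) (M : ℝ) (hM : ∀ j, x j - q j ≤ M) :
    p - (⨆ j, a j + ((q j : ℝ) : EReal)) ≤
      (M : EReal) + (p - ⨆ j, (a j + ((x j : ℝ) : EReal))) := by
  obtain ⟨j1, hj1⟩ := hrow
  obtain ⟨r1, hr1⟩ : ∃ r : ℝ, a j1 = (r : EReal) :=
    ⟨(a j1).toReal, (EReal.coe_toReal (hatop j1) hj1).symm⟩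
  set S : EReal := ⨆ j, a j + ((q j : ℝ) : EReal) with hS
  set T : EReal := ⨆ j, (a j + ((x j : ℝ) : EReal)) with hT
  -- S is real
  have hSlb : ((r1 + q j1 : ℝ) : EReal) ≤ S := by
    rw [EReal.coe_add]
    exact le_trans (by rw [hr1]) (le_iSup (fun j => a j + ((q j : ℝ) : EReal)) j1)
  have hB : ∀ j, a j + ((q j : ℝ) : EReal) ≤
      ((Finset.univ.sup' Finset.univ_nonempty (fun j => (a j).toReal + q j) : ℝ) : EReal) := by
    intro j
    by_cases hbot : a j = ⊥
    · rw [hbot, EReal.bot_add]; exact bot_le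
    · rw [← EReal.coe_toReal (hatop j) hbot, ← EReal.coe_add, EReal.coe_le_coe_iff]
      exact Finset.le_sup' (fun j => (a j).toReal + q j) (Finset.mem_univ j)
  set B : ℝ := Finset.univ.sup' Finset.univ_nonempty (fun j => (a j).toReal + q j) with hBdef
  have hSub : S ≤ (B : EReal) := iSup_le hB
  have hStop : S ≠ ⊤ := fun h => by simp [h] at hSub
  have hSbot : S ≠ ⊥ := fun h => by rw [h] at hSlb; simp at hSlb
  obtain ⟨s, hs⟩ : ∃ s : ℝ, S = (s : EReal) := ⟨S.toReal, (EReal.coe_toReal hStop hSbot).symm⟩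
  -- T ≤ M + S and T is real
  have hTub : T ≤ ((M + s : ℝ) : EReal) := by
    apply iSup_le
    intro j
    by_cases hbot : a j = ⊥
    · rw [hbot, EReal.bot_add]; exact bot_le
    · obtain ⟨r, hr⟩ : ∃ r : ℝ, a j = (r : EReal) :=
        ⟨(a j).toReal, (EReal.coe_toReal (hatop j) hbot).symm⟩
      have hq : ((r + q j : ℝ) : EReal) ≤ (s : EReal) := by
        rw [← hs, EReal.coe_add, ← hr]
        exact le_iSup (fun j => a j + ((q j : ℝ) : EReal)) j
      rw [EReal.coe_le_coe_iff] at hq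
      rw [hr, ← EReal.coe_add, EReal.coe_le_coe_iff]
      have := hM j
      linarith
  have hTlb : ((r1 + x j1 : ℝ) : EReal) ≤ T := by
    rw [EReal.coe_add]
    exact le_trans (by rw [hr1]) (le_iSup (fun j => a j + ((x j : ℝ) : EReal)) j1)
  have hTtop : T ≠ ⊤ := fun h => by rw [h, top_le_iff] at hTub; exact EReal.coe_ne_top _ hTub
  have hTbot : T ≠ ⊥ := fun h => by rw [h] at hTlb; simp at hTlb
  obtain ⟨t, ht⟩ : ∃ t : ℝ, T = (t : EReal) := ⟨T.toReal, (EReal.coe_toReal hTtop hTbot).symm⟩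
  have hts : t ≤ M + s := by
    rw [ht, EReal.coe_le_coe_iff] at hTub; exact hTub
  by_cases hpbot : p = ⊥
  · rw [hpbot, EReal.bot_sub]; exact bot_le
  · obtain ⟨rp, hrp⟩ : ∃ rp : ℝ, p = (rp : EReal) :=
      ⟨p.toReal, (EReal.coe_toReal hptop hpbot).symm⟩
    rw [hrp, hs, ht, ← EReal.coe_sub, ← EReal.coe_sub, ← EReal.coe_add, EReal.coe_le_coe_iff]
    linarith


/-- The vector `x = q` attains the value `Δ`, and hence `Δ` is the minimum of the
objective over all regular vectors. -/
theorem tropObj_min_attained (m n : ℕ) (a : Matrix (Fin m) (Fin n) EReal)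
    (hatop : ∀ i j, a i j ≠ ⊤) (harow : ∀ i, ∃ j, a i j ≠ ⊥)
    (p : Fin m → EReal) (hptop : ∀ i, p i ≠ ⊤) (hp : ∃ i, p i ≠ ⊥)
    (q : Fin n → ℝ) :
    tropObj m n a p q q = tropDelta m n a p q ∧
      ∀ x : Fin n → ℝ, tropDelta m n a p q ≤ tropObj m n a p q x := by
  obtain ⟨i0, hpi0⟩ := hp
  obtain ⟨j0, hj0⟩ := harow i0
  have hn : Nonempty (Fin n) := ⟨j0⟩
  have hm : Nonempty (Fin m) := ⟨i0⟩
  constructor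
  · rw [tropObj, tropDelta]
    simp only [sub_self, EReal.coe_zero, iSup_const, zero_add]
  · intro x
    set M : ℝ := Finset.univ.sup' Finset.univ_nonempty (fun j => x j - q j) with hMdef
    have hM : ∀ j, x j - q j ≤ M := fun j => Finset.le_sup' (fun j => x j - q j) (Finset.mem_univ j)
    have hMle : (M : EReal) ≤ ⨆ j, ((x j - q j : ℝ) : EReal) := by
      obtain ⟨j, -, hj⟩ := Finset.exists_mem_eq_sup' (Finset.univ_nonempty (α := Fin n))
        (fun j => x j - q j)
      rw [hMdef, hj]
      exact le_iSup (fun j => ((x j - q j : ℝ) : EReal)) j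
    rw [tropObj, tropDelta]
    refine le_trans (iSup_le fun i => ?_) (add_le_add_left hMle _)
    refine le_trans (trop_key (a i) (hatop i) (harow i) (p i) (hptop i) q x M hM) ?_
    exact add_le_add_right (le_iSup (fun i => p i - ⨆ j, (a i j + ((x j : ℝ) : EReal))) i) _
end

section
/- Let A be row-regular (m×n over ℝ ∪ {-∞}), p nonzero, q all finite, and Δ = max_i (p_i - max_j(a_{ij}+q_j)). A finite vector x ∈ ℝ^n satisfies max_j(x_j - q_j) + max_i(p_i - max_j(a_{ij}+x_j)) = Δ if and only if there exists α ∈ ℝ such that max_j(x_j - q_j) = α and max_j(a_{ij} + x_j) ≥ α - Δ + p_i for all i. -/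
lemma exists_real_iSup {k : ℕ} (hk : 0 < k) (f : Fin k → EReal)
    (htop : ∀ j, f j ≠ ⊤) (hbot : ∃ j, f j ≠ ⊥) :
    ∃ r : ℝ, (⨆ j, f j) = (r : EReal) := by
  have hne : (⨆ j, f j) ≠ ⊥ := by
    obtain ⟨j, hj⟩ := hbot
    exact fun h => hj (le_bot_iff.1 (h ▸ le_iSup f j))
  have hnt : (⨆ j, f j) ≠ ⊤ := by
    rw [← Finset.sup_univ_eq_ciSup]
    exact ne_of_lt ((Finset.sup_lt_iff (bot_lt_top)).2 fun j _ => (htop j).lt_top)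
  exact ⟨(⨆ j, f j).toReal, (EReal.coe_toReal hnt hne).symm⟩

/-- Characterization of minimizers: `x` attains the minimum `Δ` iff for some real `α`,
`q⁻ x = α` and `A x ≥ α Δ⁻¹ p`. -/
theorem tropObj_minimizer_characterization (m n : ℕ) (a : Matrix (Fin m) (Fin n) EReal)
    (hatop : ∀ i j, a i j ≠ ⊤) (harow : ∀ i, ∃ j, a i j ≠ ⊥)
    (p : Fin m → EReal) (hptop : ∀ i, p i ≠ ⊤) (hp : ∃ i, p i ≠ ⊥)
    (q : Fin n → ℝ) (x : Fin n → ℝ) :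
    tropObj m n a p q x = tropDelta m n a p q ↔
      ∃ α : ℝ, (⨆ j, ((x j - q j : ℝ) : EReal)) = (α : EReal) ∧
        ∀ i, (α : EReal) - tropDelta m n a p q + p i ≤
          ⨆ j, (a i j + ((x j : ℝ) : EReal)) := by
  obtain ⟨i₀, hpi₀⟩ := hp
  have hm : 0 < m := i₀.pos
  obtain ⟨j₀, _⟩ := harow i₀
  have hn : 0 < n := j₀.pos
  -- row sups are real
  have hR : ∀ (y : Fin n → ℝ) (i : Fin m),
      ∃ r : ℝ, (⨆ j, (a i j + ((y j : ℝ) : EReal))) = (r : EReal) := by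
    intro y i
    apply exists_real_iSup hn
    · intro j
      exact ne_top_of_lt (EReal.add_lt_top (hatop i j) (EReal.coe_ne_top _))
    · obtain ⟨j, hj⟩ := harow i
      exact ⟨j, by simp [EReal.add_eq_bot_iff, hj]⟩
  choose r hr using hR x
  choose rq hrq using hR q
  -- the sup of x - q is real
  obtain ⟨s, hs⟩ : ∃ s : ℝ, (⨆ j, ((x j - q j : ℝ) : EReal)) = (s : EReal) :=
    exists_real_iSup hn _ (fun j => EReal.coe_ne_top _) ⟨j₀, EReal.coe_ne_bot _⟩
  -- Delta is real
  have hsubtop : ∀ (i : Fin m) (c : ℝ), p i - (c : EReal) ≠ ⊤ := by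
    intro i c
    rw [sub_eq_add_neg, ← EReal.coe_neg]
    exact ne_top_of_lt (EReal.add_lt_top (hptop i) (EReal.coe_ne_top _))
  obtain ⟨d, hd⟩ : ∃ d : ℝ, tropDelta m n a p q = (d : EReal) := by
    apply exists_real_iSup hm
    · intro i; rw [hrq i]; exact hsubtop i _
    · refine ⟨i₀, ?_⟩
      rw [hrq i₀, sub_eq_add_neg, ← EReal.coe_neg]
      simp [EReal.add_eq_bot_iff, hpi₀]
  -- the second sup in the objective is real
  obtain ⟨t, ht⟩ : ∃ t : ℝ, (⨆ i, (p i - ⨆ j, (a i j + ((x j : ℝ) : EReal)))) = (t : EReal) := by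
    apply exists_real_iSup hm
    · intro i; rw [hr i]; exact hsubtop i _
    · refine ⟨i₀, ?_⟩
      rw [hr i₀, sub_eq_add_neg, ← EReal.coe_neg]
      simp [EReal.add_eq_bot_iff, hpi₀]
  have hobj : tropObj m n a p q x = ((s + t : ℝ) : EReal) := by
    rw [tropObj, hs, ht]; norm_cast
  -- per-row facts with p i real
  have hpireal : ∀ i : Fin m, p i ≠ ⊥ → ∃ c : ℝ, p i = (c : EReal) :=
    fun i h => ⟨(p i).toReal, (EReal.coe_toReal (hptop i) h).symm⟩
  have hpt_le : ∀ i : Fin m, p i - ((r i : ℝ) : EReal) ≤ (t : EReal) := by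
    intro i
    rw [← ht, ← hr i]
    exact le_iSup (fun i => p i - ⨆ j, (a i j + ((x j : ℝ) : EReal))) i
  constructor
  · intro h
    rw [hobj, hd] at h
    have hstd : s + t = d := by exact_mod_cast h
    refine ⟨s, hs, fun i => ?_⟩
    rw [hd, hr i]
    by_cases hpb : p i = ⊥
    · rw [hpb]
      rw [show (s : EReal) - (d : EReal) = ((s - d : ℝ) : EReal) by norm_cast]
      simp
    · obtain ⟨c, hc⟩ := hpireal i hpb
      rw [hc]
      have h1 : c - r i ≤ t := by
        have := hpt_le i
        rw [hc] at this
        exact_mod_cast this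
      have : s - d + c ≤ r i := by linarith
      exact_mod_cast this
  · rintro ⟨α, hα, hineq⟩
    have hsα : s = α := by
      rw [hs] at hα; exact_mod_cast hα
    subst hsα
    -- part 1 : t ≤ d - s
    have ht_le : (t : EReal) ≤ ((d - s : ℝ) : EReal) := by
      rw [← ht]
      refine iSup_le fun i => ?_
      rw [hr i]
      by_cases hpb : p i = ⊥
      · rw [hpb, EReal.bot_sub]; exact bot_le
      · obtain ⟨c, hc⟩ := hpireal i hpb
        have := hineq i
        rw [hd, hr i, hc] at this
        have h2 : s - d + c ≤ r i := by exact_mod_cast this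
        rw [hc]
        have : c - r i ≤ d - s := by linarith
        exact_mod_cast this
    have ht_le' : t ≤ d - s := by exact_mod_cast ht_le
    -- part 2 : d ≤ s + t
    have hxq : ∀ j, x j - q j ≤ s := by
      intro j
      have : ((x j - q j : ℝ) : EReal) ≤ (s : EReal) := hs ▸ le_iSup (fun j => ((x j - q j : ℝ) : EReal)) j
      exact_mod_cast this
    have hri : ∀ i, r i ≤ rq i + s := by
      intro i
      have : ((r i : ℝ) : EReal) ≤ ((rq i + s : ℝ) : EReal) := by
        rw [← hr i]
        refine iSup_le fun j => ?_
        have h1 : a i j + ((x j : ℝ) : EReal) ≤ a i j + (((q j + s : ℝ)) : EReal) := by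
          refine add_le_add_right ?_ _
          exact_mod_cast (by linarith [hxq j] : x j ≤ q j + s)
        refine h1.trans ?_
        have h2 : a i j + (((q j + s : ℝ)) : EReal)
            = (a i j + ((q j : ℝ) : EReal)) + ((s : ℝ) : EReal) := by
          rw [add_assoc]; norm_cast
        rw [h2, EReal.coe_add, ← hrq i]
        exact add_le_add_left (le_iSup (fun j => a i j + ((q j : ℝ) : EReal)) j) _
      exact_mod_cast this
    have hd_le : (d : EReal) ≤ ((s + t : ℝ) : EReal) := by
      rw [← hd, tropDelta]
      refine iSup_le fun i => ?_
      rw [hrq i]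
      by_cases hpb : p i = ⊥
      · rw [hpb, EReal.bot_sub]; exact bot_le
      · obtain ⟨c, hc⟩ := hpireal i hpb
        have h1 : c - r i ≤ t := by
          have := hpt_le i
          rw [hc] at this
          exact_mod_cast this
        rw [hc]
        have : c - rq i ≤ s + t := by linarith [hri i]
        exact_mod_cast this
    have hd_le' : d ≤ s + t := by exact_mod_cast hd_le
    rw [hobj, hd]
    norm_cast
    linarith
end

section
/- With A row-regular, p nonzero, q all finite, and Δ = max_i(p_i - max_j(a_{ij}+q_j)): if x and y are finite vectors both achieving the minimum Δ of f(z) = max_j(z_j - q_j) + max_i(p_i - max_j(a_{ij}+z_j)), then the componentwise maximum x ∨ y also achieves the minimum Δ. -/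
/-- A row sup with entries not all `⊥` and none `⊤`, shifted by reals, is real. -/
lemma tropAux_row_real {n : ℕ} [Nonempty (Fin n)] (b : Fin n → EReal)
    (htop : ∀ j, b j ≠ ⊤) (hbot : ∃ j, b j ≠ ⊥) (z : Fin n → ℝ) :
    ∃ r : ℝ, (⨆ j, b j + ((z j : ℝ) : EReal)) = (r : EReal) := by
  obtain ⟨j1, hj1⟩ := Finite.exists_max (fun j => b j + ((z j : ℝ) : EReal))
  have hsup : (⨆ j, b j + ((z j : ℝ) : EReal)) = b j1 + ((z j1 : ℝ) : EReal) :=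
    le_antisymm (iSup_le hj1) (le_iSup (fun j => b j + ((z j : ℝ) : EReal)) j1)
  obtain ⟨j2, hj2⟩ := hbot
  have hnb : b j1 + ((z j1 : ℝ) : EReal) ≠ ⊥ := by
    intro h
    have h2 : b j2 + ((z j2 : ℝ) : EReal) ≠ ⊥ := by
      simp [EReal.add_eq_bot_iff, hj2]
    exact h2 (le_bot_iff.1 (h ▸ hj1 j2))
  have hnt : b j1 + ((z j1 : ℝ) : EReal) ≠ ⊤ :=
    (EReal.add_lt_top (htop j1) (EReal.coe_ne_top _)).ne
  lift (b j1 + ((z j1 : ℝ) : EReal)) to ℝ using ⟨hnt, hnb⟩ with r hr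
  exact ⟨r, hsup⟩

/-- The lower bound: `Δ ≤ f(z)` for every finite `z`. -/
lemma tropObj_ge (m n : ℕ) [Nonempty (Fin m)] [Nonempty (Fin n)]
    (a : Matrix (Fin m) (Fin n) EReal)
    (hatop : ∀ i j, a i j ≠ ⊤) (harow : ∀ i, ∃ j, a i j ≠ ⊥)
    (p : Fin m → EReal) (hptop : ∀ i, p i ≠ ⊤)
    (q z : Fin n → ℝ) :
    tropDelta m n a p q ≤ tropObj m n a p q z := by
  obtain ⟨j0, hj0⟩ := Finite.exists_max (fun j => z j - q j)
  set s : ℝ := z j0 - q j0 with hs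
  have hS : ((s : ℝ) : EReal) ≤ ⨆ j, ((z j - q j : ℝ) : EReal) := le_iSup (fun j => ((z j - q j : ℝ) : EReal)) j0
  -- each row sup at q is a real number
  have key : ∀ i, p i - (⨆ j, a i j + ((q j : ℝ) : EReal)) ≤
      ((s : ℝ) : EReal) + (p i - ⨆ j, a i j + ((z j : ℝ) : EReal)) := by
    intro i
    obtain ⟨r, hr⟩ := tropAux_row_real (a i) (hatop i) (harow i) q
    obtain ⟨r2, hr2⟩ := tropAux_row_real (a i) (hatop i) (harow i) z
    have hle : (⨆ j, a i j + ((z j : ℝ) : EReal)) ≤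
        (⨆ j, a i j + ((q j : ℝ) : EReal)) + ((s : ℝ) : EReal) := by
      apply iSup_le
      intro j
      have hzj : ((z j : ℝ) : EReal) = ((q j : ℝ) : EReal) + ((z j - q j : ℝ) : EReal) := by
        rw [← EReal.coe_add]; norm_num
      rw [hzj, ← add_assoc]
      exact add_le_add (le_iSup (fun j => a i j + ((q j : ℝ) : EReal)) j) (EReal.coe_le_coe_iff.2 (hj0 j))
    rw [hr, hr2] at *
    by_cases hb : p i = ⊥
    · simp [hb]
    · lift p i to ℝ using ⟨hptop i, hb⟩ with pr hpr
      have : r2 ≤ r + s := by exact_mod_cast hle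
      norm_cast
      linarith
  rw [tropObj, tropDelta]
  apply iSup_le
  intro i
  exact (key i).trans (add_le_add (hS) (le_iSup (fun i => p i - ⨆ j, a i j + ((z j : ℝ) : EReal)) i))

/-- Closure under tropical addition: if `x` and `y` both attain the minimum `Δ`, then so
does the componentwise maximum `x ⊕ y`. -/
theorem tropObj_closed_under_sup (m n : ℕ) (a : Matrix (Fin m) (Fin n) EReal)
    (hatop : ∀ i j, a i j ≠ ⊤) (harow : ∀ i, ∃ j, a i j ≠ ⊥)
    (p : Fin m → EReal) (hptop : ∀ i, p i ≠ ⊤) (hp : ∃ i, p i ≠ ⊥)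
    (q : Fin n → ℝ) (x y : Fin n → ℝ)
    (hx : tropObj m n a p q x = tropDelta m n a p q)
    (hy : tropObj m n a p q y = tropDelta m n a p q) :
    tropObj m n a p q (fun i => max (x i) (y i)) = tropDelta m n a p q := by
  haveI : Nonempty (Fin m) := ⟨hp.choose⟩
  haveI : Nonempty (Fin n) := ⟨(harow hp.choose).choose⟩
  refine le_antisymm ?_ (tropObj_ge m n a hatop harow p hptop q _)
  -- first component splits as a max
  have hSsup : (⨆ j, ((max (x j) (y j) - q j : ℝ) : EReal)) =
      (⨆ j, ((x j - q j : ℝ) : EReal)) ⊔ (⨆ j, ((y j - q j : ℝ) : EReal)) := by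
    rw [← iSup_sup_eq]
    congr 1
    funext j
    rcases le_total (x j) (y j) with h | h
    · rw [max_eq_right h, sup_eq_right.2 (EReal.coe_le_coe_iff.2 (by linarith))]
    · rw [max_eq_left h, sup_eq_left.2 (EReal.coe_le_coe_iff.2 (by linarith))]
  -- second component is dominated by each of the two
  have hT : ∀ z : Fin n → ℝ, (∀ j, z j ≤ max (x j) (y j)) →
      (⨆ i, (p i - ⨆ j, a i j + ((max (x j) (y j) : ℝ) : EReal))) ≤
      (⨆ i, (p i - ⨆ j, a i j + ((z j : ℝ) : EReal))) := by
    intro z hz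
    apply iSup_mono
    intro i
    refine EReal.sub_le_sub le_rfl (iSup_mono fun j => ?_)
    exact add_le_add_right (EReal.coe_le_coe_iff.2 (hz j)) _
  have hTx := hT x (fun j => le_max_left _ _)
  have hTy := hT y (fun j => le_max_right _ _)
  rw [tropObj, hSsup]
  rcases le_total (⨆ j, ((y j - q j : ℝ) : EReal)) (⨆ j, ((x j - q j : ℝ) : EReal)) with h | h
  · rw [sup_eq_left.2 h]
    calc (⨆ j, ((x j - q j : ℝ) : EReal)) +
        (⨆ i, (p i - ⨆ j, a i j + ((max (x j) (y j) : ℝ) : EReal)))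
        ≤ (⨆ j, ((x j - q j : ℝ) : EReal)) +
          (⨆ i, (p i - ⨆ j, a i j + ((x j : ℝ) : EReal))) := add_le_add_right hTx _
      _ = tropDelta m n a p q := hx
  · rw [sup_eq_right.2 h]
    calc (⨆ j, ((y j - q j : ℝ) : EReal)) +
        (⨆ i, (p i - ⨆ j, a i j + ((max (x j) (y j) : ℝ) : EReal)))
        ≤ (⨆ j, ((y j - q j : ℝ) : EReal)) +
          (⨆ i, (p i - ⨆ j, a i j + ((y j : ℝ) : EReal))) := add_le_add_right hTy _
      _ = tropDelta m n a p q := hy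
end

section
/- Let A be row-regular, p nonzero, q all finite, Δ = max_i(p_i - max_j(a_{ij}+q_j)), and let be the sparsified matrix with â_{ij} = a_{ij} when a_{ij} ≥ p_i - Δ - q_j and -∞ otherwise. Then for every finite vector x ∈ ℝ^n, f_Â(x) = Δ if and only if f_A(x) = Δ, where f_M(x) = max_j(x_j - q_j) + max_i(p_i - max_j(m_{ij}+x_j)). In particular, sparsification preserves the set of minimizers and the minimum value. -/
private lemma ereal_add_coe_ne_top {a : EReal} (h : a ≠ ⊤) (r : ℝ) : a + (r : EReal) ≠ ⊤ := by
  induction a with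
  | bot => simp
  | coe s => rw [← EReal.coe_add]; exact EReal.coe_ne_top _
  | top => exact absurd rfl h

private lemma ereal_add_coe_ne_bot {a : EReal} (h : a ≠ ⊥) (r : ℝ) : a + (r : EReal) ≠ ⊥ := by
  simp [EReal.add_eq_bot_iff, h]

private lemma ereal_sup_real {ι : Type*} [Finite ι] [Nonempty ι] (g : ι → EReal)
    (htop : ∀ i, g i ≠ ⊤) (hbot : ∃ i, g i ≠ ⊥) :
    ∃ r : ℝ, (⨆ i, g i) = (r : EReal) ∧ ∃ i, g i = (r : EReal) := by
  obtain ⟨i0, h0⟩ := exists_eq_ciSup_of_finite (f := g)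
  obtain ⟨i1, h1⟩ := hbot
  have hb : g i0 ≠ ⊥ := by
    intro hB
    exact h1 (le_bot_iff.1 (hB ▸ h0 ▸ le_iSup g i1))
  refine ⟨(g i0).toReal, ?_, i0, (EReal.coe_toReal (htop i0) hb).symm⟩
  rw [← h0, EReal.coe_toReal (htop i0) hb]

open Classical in
/-- Sparsification preserves the minimum value and the set of minimizers: with
`Â i j = a i j` when `a i j ≥ p i - Δ - q j` and `-∞` otherwise, a regular vector `x`
attains the value `Δ` for `Â` iff it does for `A`. -/
theorem trop_sparsification_preserves_minimizers (m n : ℕ) (a : Matrix (Fin m) (Fin n) EReal)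
    (hatop : ∀ i j, a i j ≠ ⊤) (harow : ∀ i, ∃ j, a i j ≠ ⊥)
    (p : Fin m → EReal) (hptop : ∀ i, p i ≠ ⊤) (hp : ∃ i, p i ≠ ⊥)
    (q : Fin n → ℝ) (x : Fin n → ℝ) :
    tropObj m n
        (fun i j => if p i - tropDelta m n a p q - ((q j : ℝ) : EReal) ≤ a i j
          then a i j else ⊥) p q x = tropDelta m n a p q ↔
      tropObj m n a p q x = tropDelta m n a p q := by
  obtain ⟨i0, hpi0⟩ := hp
  haveI : Nonempty (Fin m) := ⟨i0⟩
  obtain ⟨j00, _⟩ := harow i0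
  haveI : Nonempty (Fin n) := ⟨j00⟩
  set Δ := tropDelta m n a p q with hΔ
  set A' : Matrix (Fin m) (Fin n) EReal :=
    (fun i j => if p i - Δ - ((q j : ℝ) : EReal) ≤ a i j then a i j else ⊥) with hA'
  -- the sup defining the first term of the objective, as a real number
  obtain ⟨c, hc, -⟩ := ereal_sup_real (fun j => ((x j - q j : ℝ) : EReal))
    (fun j => EReal.coe_ne_top _) ⟨j00, EReal.coe_ne_bot _⟩
  have hcge : ∀ j, x j - q j ≤ c := fun j => by
    rw [← EReal.coe_le_coe_iff, ← hc]
    exact le_iSup (fun j => ((x j - q j : ℝ) : EReal)) j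
  -- the row sups against q, as real numbers
  have hsq : ∀ i, ∃ r : ℝ, (⨆ j, a i j + ((q j : ℝ) : EReal)) = (r : EReal) := by
    intro i
    obtain ⟨j1, hj1⟩ := harow i
    obtain ⟨r, hr, -⟩ := ereal_sup_real (fun j => a i j + ((q j : ℝ) : EReal))
      (fun j => ereal_add_coe_ne_top (hatop i j) _) ⟨j1, ereal_add_coe_ne_bot hj1 _⟩
    exact ⟨r, hr⟩
  choose sq hsq using hsq
  -- the row sups against x, as real numbers, with attaining index
  have hsx : ∀ i, ∃ r : ℝ, (⨆ j, a i j + ((x j : ℝ) : EReal)) = (r : EReal) ∧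
      ∃ j, a i j + ((x j : ℝ) : EReal) = (r : EReal) := by
    intro i
    obtain ⟨j1, hj1⟩ := harow i
    exact ereal_sup_real (fun j => a i j + ((x j : ℝ) : EReal))
      (fun j => ereal_add_coe_ne_top (hatop i j) _) ⟨j1, ereal_add_coe_ne_bot hj1 _⟩
  choose sx hsx hsxw using hsx
  -- Δ as a sup of terms p i - sq i
  have hΔeq : Δ = ⨆ i, (p i - ((sq i : ℝ) : EReal)) := by
    rw [hΔ, tropDelta]
    exact iSup_congr fun i => by rw [hsq i]
  -- Δ is a real number
  obtain ⟨d, hd, -⟩ := ereal_sup_real (fun i => p i - ((sq i : ℝ) : EReal))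
    (fun i => by
      show p i - ((sq i : ℝ) : EReal) ≠ ⊤
      rw [sub_eq_add_neg, ← EReal.coe_neg]
      exact ereal_add_coe_ne_top (hptop i) _)
    ⟨i0, by
      show p i0 - ((sq i0 : ℝ) : EReal) ≠ ⊥
      rw [sub_eq_add_neg, ← EReal.coe_neg]
      exact ereal_add_coe_ne_bot hpi0 _⟩
  rw [← hΔeq] at hd
  -- lower bound : Δ ≤ tropObj a
  have hlow : Δ ≤ tropObj m n a p q x := by
    rw [hΔeq]
    refine iSup_le fun i => ?_
    have key : (⨆ j, a i j + ((x j : ℝ) : EReal)) ≤ ((c + sq i : ℝ) : EReal) := by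
      refine iSup_le fun j => ?_
      have h1 : ((x j : ℝ) : EReal) = ((q j : ℝ) : EReal) + ((x j - q j : ℝ) : EReal) := by
        rw [← EReal.coe_add]; ring_nf
      calc a i j + ((x j : ℝ) : EReal)
          = (a i j + ((q j : ℝ) : EReal)) + ((x j - q j : ℝ) : EReal) := by
            rw [h1, add_assoc]
        _ ≤ ((sq i : ℝ) : EReal) + ((c : ℝ) : EReal) := by
            refine add_le_add ?_ (EReal.coe_le_coe_iff.2 (hcge j))
            rw [← hsq i]; exact le_iSup (fun j => a i j + ((q j : ℝ) : EReal)) j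
        _ = ((c + sq i : ℝ) : EReal) := by rw [← EReal.coe_add]; ring_nf
    have h2 : p i - ((c + sq i : ℝ) : EReal) ≤ p i - ⨆ j, a i j + ((x j : ℝ) : EReal) :=
      EReal.sub_le_sub le_rfl key
    calc p i - ((sq i : ℝ) : EReal)
        = ((c : ℝ) : EReal) + (p i - ((c + sq i : ℝ) : EReal)) := by
          rw [sub_eq_add_neg, sub_eq_add_neg, ← EReal.coe_neg, ← EReal.coe_neg,
            add_comm ((c : ℝ) : EReal), add_assoc, ← EReal.coe_add]
          norm_num
      _ ≤ ((c : ℝ) : EReal) + (p i - ⨆ j, a i j + ((x j : ℝ) : EReal)) :=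
          add_le_add_right h2 _
      _ ≤ tropObj m n a p q x := by
          rw [tropObj, hc]
          exact add_le_add_right (le_iSup (fun i => p i - ⨆ j, a i j + ((x j : ℝ) : EReal)) i) _
  -- monotonicity : tropObj a ≤ tropObj A'
  have hmono : tropObj m n a p q x ≤ tropObj m n A' p q x := by
    rw [tropObj, tropObj]
    refine add_le_add_right (iSup_mono fun i => EReal.sub_le_sub le_rfl
      (iSup_mono fun j => add_le_add_left ?_ _)) _
    by_cases h : p i - Δ - ((q j : ℝ) : EReal) ≤ a i j <;> simp [hA', h]
  -- if tropObj a = Δ then the sparsified rows have the same sups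
  have hcore : tropObj m n a p q x = Δ → tropObj m n A' p q x = tropObj m n a p q x := by
    intro h
    have hrow : ∀ i, (⨆ j, A' i j + ((x j : ℝ) : EReal))
        = ⨆ j, a i j + ((x j : ℝ) : EReal) := by
      intro i
      refine le_antisymm (iSup_mono fun j => add_le_add_left ?_ _) ?_
      · by_cases hk : p i - Δ - ((q j : ℝ) : EReal) ≤ a i j <;> simp [hA', hk]
      · obtain ⟨j1, hj1⟩ := hsxw i
        -- a i j1 is the real number sx i - x j1
        have ha1 : a i j1 = ((sx i - x j1 : ℝ) : EReal) := by
          have := hj1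
          calc a i j1 = a i j1 + ((x j1 : ℝ) : EReal) - ((x j1 : ℝ) : EReal) :=
              EReal.add_sub_cancel_right.symm
            _ = ((sx i : ℝ) : EReal) - ((x j1 : ℝ) : EReal) := by rw [hj1]
            _ = ((sx i - x j1 : ℝ) : EReal) := by rw [← EReal.coe_sub]
        -- from the hypothesis, p i ≤ d - c + sx i
        have h2 : ((c : ℝ) : EReal) + (p i - ((sx i : ℝ) : EReal)) ≤ ((d : ℝ) : EReal) := by
          calc ((c : ℝ) : EReal) + (p i - ((sx i : ℝ) : EReal))
              ≤ ((c : ℝ) : EReal) + ⨆ i', (p i' - ⨆ j, a i' j + ((x j : ℝ) : EReal)) := by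
                refine add_le_add_right ?_ _
                have := le_iSup (fun i' => p i' - ⨆ j, a i' j + ((x j : ℝ) : EReal)) i
                rwa [hsx i] at this
            _ = tropObj m n a p q x := by rw [tropObj, hc]
            _ = ((d : ℝ) : EReal) := by rw [h, hd]
        have h3 : p i - ((sx i : ℝ) : EReal) ≤ ((d - c : ℝ) : EReal) := by
          rw [EReal.coe_sub]
          exact (EReal.le_sub_iff_add_le (Or.inl (EReal.coe_ne_bot c))
            (Or.inl (EReal.coe_ne_top c))).2 (by rwa [add_comm] at h2)
        have h4 : p i ≤ ((d - c + sx i : ℝ) : EReal) := by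
          calc p i = p i - ((sx i : ℝ) : EReal) + ((sx i : ℝ) : EReal) :=
              EReal.sub_add_cancel.symm
            _ ≤ ((d - c : ℝ) : EReal) + ((sx i : ℝ) : EReal) := add_le_add_left h3 _
            _ = ((d - c + sx i : ℝ) : EReal) := by rw [← EReal.coe_add]
        -- entry (i, j1) is kept
        have hkeep : p i - Δ - ((q j1 : ℝ) : EReal) ≤ a i j1 := by
          rw [hd, ha1]
          calc p i - ((d : ℝ) : EReal) - ((q j1 : ℝ) : EReal)
              ≤ ((d - c + sx i : ℝ) : EReal) - ((d : ℝ) : EReal) - ((q j1 : ℝ) : EReal) :=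
                EReal.sub_le_sub (EReal.sub_le_sub h4 le_rfl) le_rfl
            _ = ((d - c + sx i - d - q j1 : ℝ) : EReal) := by
                rw [← EReal.coe_sub, ← EReal.coe_sub]
            _ ≤ ((sx i - x j1 : ℝ) : EReal) := by
                rw [EReal.coe_le_coe_iff]
                have := hcge j1
                linarith
        have hA'j1 : A' i j1 = a i j1 := by rw [hA']; simp only [if_pos hkeep]
        rw [hsx i]
        calc ((sx i : ℝ) : EReal) = A' i j1 + ((x j1 : ℝ) : EReal) := by rw [hA'j1, hj1]
          _ ≤ ⨆ j, A' i j + ((x j : ℝ) : EReal) := le_iSup (fun j => A' i j + ((x j : ℝ) : EReal)) j1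
    rw [tropObj, tropObj]
    congr 1
    exact iSup_congr fun i => by rw [hrow i]
  constructor
  · intro h
    exact le_antisymm (le_trans hmono (le_of_eq h)) hlow
  · intro h
    rw [hcore h, h]
end

section
/- Let A be a row-regular sparsified matrix (every finite entry a_{ij} ≥ p_i - Δ - q_j), p nonzero, q all finite, Δ = max_i(p_i - max_j(a_{ij}+q_j)). Then every x ∈ ℝ^n satisfying α + (A⁻p)_j - Δ ≤ x_j ≤ α + q_j for all j (for some α ∈ ℝ), where (A⁻p)_j = max_i(p_i - a_{ij}) over i with a_{ij} finite, achieves the minimum value Δ of f(x) = max_j(x_j - q_j) + max_i(p_i - max_j(a_{ij}+x_j)). -/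
private lemma ereal_exists_coe {z : EReal} (ht : z ≠ ⊤) (hb : z ≠ ⊥) :
    ∃ r : ℝ, z = (r : EReal) := by
  lift z to ℝ using ⟨ht, hb⟩
  exact ⟨z, rfl⟩

private lemma ereal_add_ne_top {x y : EReal} (hx : x ≠ ⊤) (hy : y ≠ ⊤) : x + y ≠ ⊤ := by
  rcases eq_or_ne x ⊥ with hx' | hx'
  · simp [hx']
  rcases eq_or_ne y ⊥ with hy' | hy'
  · simp [hy']
  obtain ⟨r, rfl⟩ := ereal_exists_coe hx hx'
  obtain ⟨s, rfl⟩ := ereal_exists_coe hy hy'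
  rw [← EReal.coe_add]
  exact EReal.coe_ne_top _

private lemma ereal_isup_attained {k : ℕ} [Nonempty (Fin k)] (f : Fin k → EReal) :
    ∃ i, (⨆ j, f j) = f i := by
  obtain ⟨i, hi⟩ := Finite.exists_max f
  exact ⟨i, le_antisymm (iSup_le hi) (le_iSup f i)⟩

open Classical in
/-- Extended solution set: for a row-regular sparsified matrix `A`, every vector `x` with
`α Δ⁻¹ A⁻ p ≤ x ≤ α q` for some real `α` attains the minimum value `Δ`. -/
theorem trop_extended_solution (m n : ℕ) (a : Matrix (Fin m) (Fin n) EReal)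
    (hatop : ∀ i j, a i j ≠ ⊤) (harow : ∀ i, ∃ j, a i j ≠ ⊥)
    (p : Fin m → EReal) (hptop : ∀ i, p i ≠ ⊤) (hp : ∃ i, p i ≠ ⊥)
    (q : Fin n → ℝ)
    (hsparse : ∀ i j, a i j ≠ ⊥ → p i - tropDelta m n a p q - ((q j : ℝ) : EReal) ≤ a i j)
    (x : Fin n → ℝ) (α : ℝ)
    (hbox : ∀ j, (α : EReal) + (⨆ i, if a i j = ⊥ then (⊥ : EReal) else p i - a i j)
        - tropDelta m n a p q ≤ ((x j : ℝ) : EReal) ∧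
      ((x j : ℝ) : EReal) ≤ (α : EReal) + ((q j : ℝ) : EReal)) :
    tropObj m n a p q x = tropDelta m n a p q := by
  obtain ⟨i0, hi0⟩ := hp
  have hm : Nonempty (Fin m) := ⟨i0⟩
  have hn : Nonempty (Fin n) := ⟨(harow i0).choose⟩
  set S : Fin m → EReal := fun i => ⨆ j, (a i j + ((q j : ℝ) : EReal)) with hSdef
  set T : Fin m → EReal := fun i => ⨆ j, (a i j + ((x j : ℝ) : EReal)) with hTdef
  have hDelta : tropDelta m n a p q = ⨆ i, (p i - S i) := rfl
  -- basic finiteness of the row maxima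
  have hSbot : ∀ i, S i ≠ ⊥ := by
    intro i hbot
    obtain ⟨j, hj⟩ := harow i
    have hle := le_iSup (fun j => a i j + ((q j : ℝ) : EReal)) j
    rw [show (⨆ j, a i j + ((q j : ℝ) : EReal)) = S i from rfl, hbot, le_bot_iff,
      EReal.add_eq_bot_iff] at hle
    rcases hle with h | h
    · exact hj h
    · exact EReal.coe_ne_bot _ h
  have hStop : ∀ i, S i ≠ ⊤ := by
    intro i
    obtain ⟨j, hj⟩ := ereal_isup_attained (fun j => a i j + ((q j : ℝ) : EReal))
    rw [hSdef]
    simp only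
    rw [hj]
    exact ereal_add_ne_top (hatop i j) (EReal.coe_ne_top _)
  have hTbot : ∀ i, T i ≠ ⊥ := by
    intro i hbot
    obtain ⟨j, hj⟩ := harow i
    have hle := le_iSup (fun j => a i j + ((x j : ℝ) : EReal)) j
    rw [show (⨆ j, a i j + ((x j : ℝ) : EReal)) = T i from rfl, hbot, le_bot_iff,
      EReal.add_eq_bot_iff] at hle
    rcases hle with h | h
    · exact hj h
    · exact EReal.coe_ne_bot _ h
  -- Δ is a real number
  have hΔbot : tropDelta m n a p q ≠ ⊥ := by
    intro hbot
    have hle := le_iSup (fun i => p i - S i) i0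
    rw [hDelta] at hbot
    rw [hbot, le_bot_iff] at hle
    rw [sub_eq_add_neg, EReal.add_eq_bot_iff] at hle
    rcases hle with h | h
    · exact hi0 h
    · rw [EReal.neg_eq_bot_iff] at h
      exact hStop i0 h
  have hΔtop : tropDelta m n a p q ≠ ⊤ := by
    obtain ⟨i, hi⟩ := ereal_isup_attained (fun i => p i - S i)
    rw [hDelta, hi]
    rw [sub_eq_add_neg]
    refine ereal_add_ne_top (hptop i) ?_
    intro h
    exact hSbot i (EReal.neg_eq_top_iff.mp h)
  obtain ⟨d, hd⟩ := ereal_exists_coe hΔtop hΔbot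
  -- Upper bound: tropObj ≤ Δ
  have hβ : (⨆ j, ((x j - q j : ℝ) : EReal)) ≤ ((α : ℝ) : EReal) := by
    refine iSup_le fun j => ?_
    have h2 := (hbox j).2
    rw [show ((α : ℝ) : EReal) + ((q j : ℝ) : EReal) = ((α + q j : ℝ) : EReal) from
      (EReal.coe_add _ _).symm, EReal.coe_le_coe_iff] at h2
    rw [EReal.coe_le_coe_iff]
    linarith
  have hterm : ∀ i, p i - T i ≤ ((d - α : ℝ) : EReal) := by
    intro i
    rcases eq_or_ne (p i) ⊥ with hpi | hpi
    · rw [hpi, EReal.bot_sub]; exact bot_le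
    obtain ⟨r, hr⟩ := ereal_exists_coe (hptop i) hpi
    obtain ⟨j, haj⟩ := harow i
    obtain ⟨c, hc⟩ := ereal_exists_coe (hatop i j) haj
    have hkey : ((α : ℝ) : EReal) + (p i - a i j) - tropDelta m n a p q ≤ ((x j : ℝ) : EReal) := by
      refine le_trans ?_ (hbox j).1
      refine EReal.sub_le_sub (add_le_add le_rfl ?_) le_rfl
      have := le_iSup (fun i' => if a i' j = ⊥ then (⊥ : EReal) else p i' - a i' j) i
      simpa [haj] using this
    have hreal : α + (r - c) - d ≤ x j := by
      rw [hr, hc, hd] at hkey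
      exact_mod_cast hkey
    have hT : ((c + x j : ℝ) : EReal) ≤ T i := by
      have := le_iSup (fun j => a i j + ((x j : ℝ) : EReal)) j
      rw [hc] at this
      rw [EReal.coe_add]
      exact this
    calc p i - T i ≤ p i - ((c + x j : ℝ) : EReal) := EReal.sub_le_sub le_rfl hT
      _ = ((r - (c + x j) : ℝ) : EReal) := by rw [hr, ← EReal.coe_sub]
      _ ≤ ((d - α : ℝ) : EReal) := by rw [EReal.coe_le_coe_iff]; linarith
  have hle : tropObj m n a p q x ≤ tropDelta m n a p q := by
    have h1 : tropObj m n a p q x ≤ ((α : ℝ) : EReal) + ((d - α : ℝ) : EReal) :=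
      add_le_add hβ (iSup_le hterm)
    rw [← EReal.coe_add] at h1
    rw [hd]
    convert h1 using 2
    ring
  -- Lower bound: Δ ≤ tropObj
  obtain ⟨j0, hj0max⟩ := Finite.exists_max (fun j => x j - q j)
  set b : ℝ := x j0 - q j0 with hbdef
  have hβeq : (⨆ j, ((x j - q j : ℝ) : EReal)) = ((b : ℝ) : EReal) := by
    refine le_antisymm (iSup_le fun j => EReal.coe_le_coe_iff.mpr (hj0max j)) ?_
    exact le_iSup (fun j => ((x j - q j : ℝ) : EReal)) j0
  have hterm2 : ∀ i, p i - S i ≤ (⨆ i', (p i' - T i')) + ((b : ℝ) : EReal) := by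
    intro i
    rcases eq_or_ne (p i) ⊥ with hpi | hpi
    · rw [hpi, EReal.bot_sub]; exact bot_le
    obtain ⟨r, hr⟩ := ereal_exists_coe (hptop i) hpi
    obtain ⟨s, hs⟩ := ereal_exists_coe (hStop i) (hSbot i)
    have hTle : T i ≤ ((s + b : ℝ) : EReal) := by
      refine iSup_le fun j => ?_
      rcases eq_or_ne (a i j) ⊥ with hb' | hb'
      · rw [hb', EReal.bot_add]; exact bot_le
      obtain ⟨c, hc⟩ := ereal_exists_coe (hatop i j) hb'
      have h1 : a i j + ((q j : ℝ) : EReal) ≤ S i :=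
        le_iSup (fun j => a i j + ((q j : ℝ) : EReal)) j
      rw [hc, hs, ← EReal.coe_add, EReal.coe_le_coe_iff] at h1
      have h2 : x j - q j ≤ b := hj0max j
      rw [hc, ← EReal.coe_add, EReal.coe_le_coe_iff]
      linarith
    have h3 : p i - ((s + b : ℝ) : EReal) ≤ p i - T i := EReal.sub_le_sub le_rfl hTle
    have h3' : ((r - (s + b) : ℝ) : EReal) ≤ p i - T i := by
      rw [EReal.coe_sub, ← hr]; exact h3
    calc p i - S i = ((r - s : ℝ) : EReal) := by rw [hr, hs, ← EReal.coe_sub]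
      _ = ((r - (s + b) : ℝ) : EReal) + ((b : ℝ) : EReal) := by norm_cast; ring
      _ ≤ (p i - T i) + ((b : ℝ) : EReal) := add_le_add h3' le_rfl
      _ ≤ (⨆ i', (p i' - T i')) + ((b : ℝ) : EReal) :=
          add_le_add (le_iSup (fun i' => p i' - T i') i) le_rfl
  have hge : tropDelta m n a p q ≤ tropObj m n a p q x := by
    rw [hDelta]
    refine le_trans (iSup_le hterm2) ?_
    unfold tropObj
    rw [hβeq, add_comm]
  exact le_antisymm hle hge
end

section
/- Let A be a row-regular sparsified n-column matrix, p nonzero, q all finite, Δ as above. Suppose x ∈ ℝ^n satisfies the system max_j(x_j - q_j) = α and max_j(a_{ij} + x_j) ≥ α - Δ + p_i for all i, for some α ∈ ℝ. Then there exists a matrix A₁ obtained from A by keeping exactly one finite entry in each row (setting all other entries to -∞) such that α - Δ + (A₁⁻ p)_j ≤ x_j ≤ α + q_j for all j. -/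
open Classical in
/-- Every solution of the system `q⁻ x = α`, `A x ≥ α Δ⁻¹ p` lies in a box
`α Δ⁻¹ A₁⁻ p ≤ x ≤ α q` for some matrix `A₁` obtained from the sparsified `A` by keeping
exactly one finite entry per row (encoded by a selection function `σ`). -/
theorem trop_minimizer_in_box (m n : ℕ) (a : Matrix (Fin m) (Fin n) EReal)
    (hatop : ∀ i j, a i j ≠ ⊤) (harow : ∀ i, ∃ j, a i j ≠ ⊥)
    (p : Fin m → EReal) (hptop : ∀ i, p i ≠ ⊤) (hp : ∃ i, p i ≠ ⊥)
    (q : Fin n → ℝ)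
    (hsparse : ∀ i j, a i j ≠ ⊥ → p i - tropDelta m n a p q - ((q j : ℝ) : EReal) ≤ a i j)
    (x : Fin n → ℝ) (α : ℝ)
    (hq : (⨆ j, ((x j - q j : ℝ) : EReal)) = (α : EReal))
    (hA : ∀ i, (α : EReal) - tropDelta m n a p q + p i ≤
      ⨆ j, (a i j + ((x j : ℝ) : EReal))) :
    ∃ σ : Fin m → Fin n, (∀ i, a i (σ i) ≠ ⊥) ∧
      ∀ j, (α : EReal) - tropDelta m n a p q +
          (⨆ i, if σ i = j then p i - a i j else (⊥ : EReal)) ≤ ((x j : ℝ) : EReal) ∧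
        ((x j : ℝ) : EReal) ≤ (α : EReal) + ((q j : ℝ) : EReal) := by
  obtain ⟨i0, hi0⟩ := hp
  have hm : Nonempty (Fin m) := ⟨i0⟩
  obtain ⟨j0, hj0⟩ := harow i0
  have hn : Nonempty (Fin n) := ⟨j0⟩
  -- inner sup facts
  have hSbot : ∀ i, (⨆ j, (a i j + ((q j : ℝ) : EReal))) ≠ ⊥ := by
    intro i
    obtain ⟨j, hj⟩ := harow i
    have h1 : a i j + ((q j : ℝ) : EReal) ≠ ⊥ := by
      simp only [ne_eq, EReal.add_eq_bot_iff]; push_neg; exact ⟨hj, EReal.coe_ne_bot _⟩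
    exact fun h => h1 (eq_bot_iff.2 (h ▸ le_iSup (fun j => a i j + ((q j : ℝ) : EReal)) j))
  have hStop : ∀ i, (⨆ j, (a i j + ((q j : ℝ) : EReal))) ≠ ⊤ := by
    intro i
    obtain ⟨j, hj⟩ := exists_eq_ciSup_of_finite (f := fun j => a i j + ((q j : ℝ) : EReal))
    rw [← hj]
    exact (EReal.add_lt_top (hatop i j) (EReal.coe_ne_top _)).ne
  -- Δ is a real number
  have hΔtop : tropDelta m n a p q ≠ ⊤ := by
    obtain ⟨i, hi⟩ := exists_eq_ciSup_of_finite
      (f := fun i => p i - ⨆ j, (a i j + ((q j : ℝ) : EReal)))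
    rw [tropDelta, ← hi]
    intro h
    rw [sub_eq_add_neg] at h
    exact absurd h (EReal.add_lt_top (hptop i)
      (fun h' => hSbot i (EReal.neg_eq_top_iff.1 h'))).ne
  have hΔbot : tropDelta m n a p q ≠ ⊥ := by
    intro h
    have hle : p i0 - (⨆ j, (a i0 j + ((q j : ℝ) : EReal))) ≤ tropDelta m n a p q :=
      le_iSup (fun i => p i - ⨆ j, (a i j + ((q j : ℝ) : EReal))) i0
    rw [h, le_bot_iff, sub_eq_add_neg, EReal.add_eq_bot_iff] at hle
    exact hle.elim hi0 (fun h' => hStop i0 (EReal.neg_eq_bot_iff.1 h'))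
  obtain ⟨d, hd⟩ : ∃ d : ℝ, tropDelta m n a p q = (d : EReal) :=
    ⟨(tropDelta m n a p q).toReal, (EReal.coe_toReal hΔtop hΔbot).symm⟩
  -- choose the maximizing column in each row
  have hsel : ∀ i, ∃ j, a i j + ((x j : ℝ) : EReal) = ⨆ j, (a i j + ((x j : ℝ) : EReal)) :=
    fun i => exists_eq_ciSup_of_finite
  choose σ hσeq using hsel
  have hσbot : ∀ i, a i (σ i) ≠ ⊥ := by
    intro i hbot
    obtain ⟨j, hj⟩ := harow i
    have h1 : a i j + ((x j : ℝ) : EReal) ≤ a i (σ i) + ((x (σ i) : ℝ) : EReal) :=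
      (hσeq i) ▸ le_iSup (fun j => a i j + ((x j : ℝ) : EReal)) j
    rw [hbot, EReal.bot_add, le_bot_iff, EReal.add_eq_bot_iff] at h1
    exact h1.elim hj (EReal.coe_ne_bot _)
  refine ⟨σ, hσbot, fun j => ⟨?_, ?_⟩⟩
  · -- lower bound
    rw [hd]
    have hS : (⨆ i, if σ i = j then p i - a i j else (⊥ : EReal)) ≤
        ((x j - α + d : ℝ) : EReal) := by
      refine iSup_le fun i => ?_
      split_ifs with hij
      · -- σ i = j
        by_cases hpb : p i = ⊥
        · rw [hpb, EReal.bot_sub]; exact bot_le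
        · obtain ⟨c, hc⟩ : ∃ c : ℝ, p i = (c : EReal) :=
            ⟨(p i).toReal, (EReal.coe_toReal (hptop i) hpb).symm⟩
          have habot : a i j ≠ ⊥ := hij ▸ hσbot i
          obtain ⟨b, hb⟩ : ∃ b : ℝ, a i j = (b : EReal) :=
            ⟨(a i j).toReal, (EReal.coe_toReal (hatop i j) habot).symm⟩
          have h2 := hA i
          rw [hd, hc, ← hσeq i, hij, hb] at h2
          have h3 : ((α - d + c : ℝ) : EReal) ≤ ((b + x j : ℝ) : EReal) := by
            push_cast
            convert h2 using 2
          rw [EReal.coe_le_coe_iff] at h3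
          rw [hc, hb, ← EReal.coe_sub, EReal.coe_le_coe_iff]
          linarith
      · exact bot_le
    calc (α : EReal) - (d : EReal) + (⨆ i, if σ i = j then p i - a i j else (⊥ : EReal))
        ≤ (α : EReal) - (d : EReal) + ((x j - α + d : ℝ) : EReal) := by
          exact add_le_add_right hS _
      _ = ((x j : ℝ) : EReal) := by
          rw [← EReal.coe_sub, ← EReal.coe_add]
          norm_num
  · -- upper bound
    have h1 : ((x j - q j : ℝ) : EReal) ≤ (α : EReal) :=
      hq ▸ le_iSup (fun j => ((x j - q j : ℝ) : EReal)) j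
    rw [EReal.coe_le_coe_iff] at h1
    rw [← EReal.coe_add, EReal.coe_le_coe_iff]
    linarith
end

section
/- Let A be a row-regular sparsified matrix, p nonzero, q all finite, Δ = max_i(p_i - max_j(a_{ij}+q_j)), and let A₁ be obtained from A by keeping one finite entry per row and setting the other entries to -∞. If x ∈ ℝ^n satisfies α - Δ + (A₁⁻p)_j ≤ x_j ≤ α + q_j for all j for some α ∈ ℝ, then x achieves the minimum: max_j(x_j - q_j) = α and max_j(a_{ij} + x_j) ≥ α - Δ + p_i for all i, hence f(x) = Δ. -/
lemma ereal_iSup_ne_top {ι : Type*} [Finite ι] (f : ι → EReal) (h : ∀ i, f i ≠ ⊤) :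
    (⨆ i, f i) ≠ ⊤ := by
  cases isEmpty_or_nonempty ι with
  | inl hE => simp [iSup_of_empty]
  | inr hN =>
    obtain ⟨i, hi⟩ := exists_eq_ciSup_of_finite (f := f)
    rw [← hi]; exact h i

lemma ereal_real_of_ne {x : EReal} (h1 : x ≠ ⊤) (h2 : x ≠ ⊥) : ∃ r : ℝ, x = (r : EReal) :=
  ⟨x.toReal, (EReal.coe_toReal h1 h2).symm⟩


open Classical in
/-- Converse direction of the complete-solution theorem: if `A₁` is obtained from the
row-regular sparsified matrix `A` by keeping one finite entry per row (encoded by the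
selection `σ`), then every `x` in the box `α Δ⁻¹ A₁⁻ p ≤ x ≤ α q` solves the system
`q⁻ x = α`, `A x ≥ α Δ⁻¹ p`, and hence attains the minimum `Δ`. -/
theorem trop_box_gives_minimizer (m n : ℕ) (a : Matrix (Fin m) (Fin n) EReal)
    (hatop : ∀ i j, a i j ≠ ⊤) (harow : ∀ i, ∃ j, a i j ≠ ⊥)
    (p : Fin m → EReal) (hptop : ∀ i, p i ≠ ⊤) (hp : ∃ i, p i ≠ ⊥)
    (q : Fin n → ℝ)
    (hsparse : ∀ i j, a i j ≠ ⊥ → p i - tropDelta m n a p q - ((q j : ℝ) : EReal) ≤ a i j)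
    (σ : Fin m → Fin n) (hσ : ∀ i, a i (σ i) ≠ ⊥)
    (x : Fin n → ℝ) (α : ℝ)
    (hbox : ∀ j, (α : EReal) - tropDelta m n a p q +
          (⨆ i, if σ i = j then p i - a i j else (⊥ : EReal)) ≤ ((x j : ℝ) : EReal) ∧
        ((x j : ℝ) : EReal) ≤ (α : EReal) + ((q j : ℝ) : EReal)) :
    (⨆ j, ((x j - q j : ℝ) : EReal)) = (α : EReal) ∧
      (∀ i, (α : EReal) - tropDelta m n a p q + p i ≤
        ⨆ j, (a i j + ((x j : ℝ) : EReal))) ∧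
      tropObj m n a p q x = tropDelta m n a p q := by
  classical
  set Δ : EReal := tropDelta m n a p q with hΔdef
  set S : Fin m → EReal := fun i => ⨆ j, (a i j + ((q j : ℝ) : EReal)) with hSdef
  obtain ⟨i₀, hi₀⟩ := hp
  have hΔ' : Δ = ⨆ i, (p i - S i) := by rw [hΔdef]; rfl
  have hS_ne_top : ∀ i, S i ≠ ⊤ := fun i =>
    ereal_iSup_ne_top _ fun j => (EReal.add_lt_top (hatop i j) (EReal.coe_ne_top _)).ne
  have hS_ne_bot : ∀ i, S i ≠ ⊥ := by
    intro i h
    obtain ⟨j, hj⟩ := harow i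
    have hle : a i j + ((q j : ℝ) : EReal) ≤ S i :=
      le_iSup (fun j => a i j + ((q j : ℝ) : EReal)) j
    rw [h, le_bot_iff, EReal.add_eq_bot_iff] at hle
    rcases hle with h' | h'
    · exact hj h'
    · exact EReal.coe_ne_bot _ h'
  have hterm_ne_top : ∀ i, p i - S i ≠ ⊤ := by
    intro i
    rw [sub_eq_add_neg]
    exact (EReal.add_lt_top (hptop i) (fun h => hS_ne_bot i (EReal.neg_eq_top_iff.1 h))).ne
  have hΔ_ne_top : Δ ≠ ⊤ := by rw [hΔ']; exact ereal_iSup_ne_top _ hterm_ne_top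
  obtain ⟨ρ₀, hρ₀⟩ := ereal_real_of_ne (hptop i₀) hi₀
  obtain ⟨s₀, hs₀⟩ := ereal_real_of_ne (hS_ne_top i₀) (hS_ne_bot i₀)
  have hΔ_ne_bot : Δ ≠ ⊥ := by
    intro h
    have hle : p i₀ - S i₀ ≤ Δ := hΔ' ▸ le_iSup (fun i => p i - S i) i₀
    rw [h, le_bot_iff, hρ₀, hs₀, ← EReal.coe_sub] at hle
    exact EReal.coe_ne_bot _ hle
  obtain ⟨δ, hδ⟩ := ereal_real_of_ne hΔ_ne_top hΔ_ne_bot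
  have hmne : Nonempty (Fin m) := ⟨i₀⟩
  -- choose a row attaining Δ
  obtain ⟨i₁, hi₁⟩ := exists_eq_ciSup_of_finite (f := fun i => p i - S i)
  rw [← hΔ', hδ] at hi₁
  have hp₁ : p i₁ ≠ ⊥ := by
    intro h
    rw [h, EReal.bot_sub] at hi₁
    exact EReal.coe_ne_bot δ hi₁.symm
  obtain ⟨ρ, hρ⟩ := ereal_real_of_ne (hptop i₁) hp₁
  obtain ⟨s, hs⟩ := ereal_real_of_ne (hS_ne_top i₁) (hS_ne_bot i₁)
  obtain ⟨c, hc⟩ := ereal_real_of_ne (hatop i₁ (σ i₁)) (hσ i₁)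
  have hδeq : δ = ρ - s := by
    rw [hρ, hs, ← EReal.coe_sub] at hi₁
    exact_mod_cast hi₁.symm
  have hcq : c + q (σ i₁) ≤ s := by
    have hle : a i₁ (σ i₁) + ((q (σ i₁) : ℝ) : EReal) ≤ S i₁ :=
      le_iSup (fun j => a i₁ j + ((q j : ℝ) : EReal)) (σ i₁)
    rw [hc, hs, ← EReal.coe_add] at hle
    exact_mod_cast hle
  -- lower bound of the box, in real form
  have hlow : ∀ (i : Fin m) (ρᵢ cᵢ : ℝ), p i = (ρᵢ : EReal) → a i (σ i) = (cᵢ : EReal) →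
      α - δ + (ρᵢ - cᵢ) ≤ x (σ i) := by
    intro i ρᵢ cᵢ hρᵢ hcᵢ
    have h1 := (hbox (σ i)).1
    have h2 : ((ρᵢ - cᵢ : ℝ) : EReal) ≤
        ⨆ i', if σ i' = σ i then p i' - a i' (σ i) else (⊥ : EReal) := by
      refine le_trans ?_ (le_iSup (fun i' => if σ i' = σ i then p i' - a i' (σ i)
        else (⊥ : EReal)) i)
      rw [if_pos rfl, hρᵢ, hcᵢ, ← EReal.coe_sub]
    have h3 : (α : EReal) - Δ + ((ρᵢ - cᵢ : ℝ) : EReal) ≤ ((x (σ i) : ℝ) : EReal) :=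
      le_trans (add_le_add_right h2 _) h1
    rw [hδ] at h3
    exact_mod_cast h3
  -- upper bound of the box, in real form
  have hxq : ∀ j, x j ≤ α + q j := by
    intro j
    have := (hbox j).2
    rw [← EReal.coe_add] at this
    exact_mod_cast this
  have hδle : δ ≤ ρ - c - q (σ i₁) := by
    have : ρ - s ≤ ρ - (c + q (σ i₁)) := by linarith
    linarith [hδeq]
  have hkey : α ≤ x (σ i₁) - q (σ i₁) := by
    have := hlow i₁ ρ c hρ hc
    linarith
  -- Part 1
  have h1 : (⨆ j, ((x j - q j : ℝ) : EReal)) = (α : EReal) := by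
    apply le_antisymm
    · exact iSup_le fun j => EReal.coe_le_coe_iff.2 (by linarith [hxq j])
    · exact le_trans (EReal.coe_le_coe_iff.2 hkey)
        (le_iSup (fun j => ((x j - q j : ℝ) : EReal)) (σ i₁))
  -- Part 2
  have h2 : ∀ i, (α : EReal) - Δ + p i ≤ ⨆ j, (a i j + ((x j : ℝ) : EReal)) := by
    intro i
    by_cases hpb : p i = ⊥
    · rw [hpb, EReal.add_bot]; exact bot_le
    · obtain ⟨ρᵢ, hρᵢ⟩ := ereal_real_of_ne (hptop i) hpb
      obtain ⟨cᵢ, hcᵢ⟩ := ereal_real_of_ne (hatop i (σ i)) (hσ i)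
      have hx := hlow i ρᵢ cᵢ hρᵢ hcᵢ
      refine le_trans ?_ (le_iSup (fun j => a i j + ((x j : ℝ) : EReal)) (σ i))
      rw [hρᵢ, hcᵢ, hδ]
      have : ((α - δ + ρᵢ : ℝ) : EReal) ≤ ((cᵢ + x (σ i) : ℝ) : EReal) :=
        EReal.coe_le_coe_iff.2 (by linarith)
      exact_mod_cast this
  -- the row suprema A i are finite
  have hA : ∀ i, ∃ r : ℝ, (⨆ j, (a i j + ((x j : ℝ) : EReal))) = (r : EReal) := by
    intro i
    refine ereal_real_of_ne (ereal_iSup_ne_top _ fun j =>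
      (EReal.add_lt_top (hatop i j) (EReal.coe_ne_top _)).ne) ?_
    intro h
    have hle : a i (σ i) + ((x (σ i) : ℝ) : EReal) ≤
        ⨆ j, (a i j + ((x j : ℝ) : EReal)) :=
      le_iSup (fun j => a i j + ((x j : ℝ) : EReal)) (σ i)
    rw [h, le_bot_iff, EReal.add_eq_bot_iff] at hle
    rcases hle with h' | h'
    · exact hσ i h'
    · exact EReal.coe_ne_bot _ h'
  -- Part 3
  have hT : (⨆ i, (p i - ⨆ j, (a i j + ((x j : ℝ) : EReal)))) = ((δ - α : ℝ) : EReal) := by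
    apply le_antisymm
    · refine iSup_le fun i => ?_
      by_cases hpb : p i = ⊥
      · rw [hpb, EReal.bot_sub]; exact bot_le
      · obtain ⟨ρᵢ, hρᵢ⟩ := ereal_real_of_ne (hptop i) hpb
        obtain ⟨Aᵢ, hAᵢ⟩ := hA i
        have hge := h2 i
        rw [hρᵢ, hAᵢ, hδ] at hge
        have h' : α - δ + ρᵢ ≤ Aᵢ := by exact_mod_cast hge
        rw [hρᵢ, hAᵢ, ← EReal.coe_sub]
        exact EReal.coe_le_coe_iff.2 (by linarith)
    · refine le_trans ?_
        (le_iSup (fun i => p i - ⨆ j, (a i j + ((x j : ℝ) : EReal))) i₁)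
      obtain ⟨A₁, hA₁⟩ := hA i₁
      have hub : (⨆ j, (a i₁ j + ((x j : ℝ) : EReal))) ≤ ((s + α : ℝ) : EReal) := by
        refine iSup_le fun j => ?_
        calc a i₁ j + ((x j : ℝ) : EReal)
            ≤ a i₁ j + ((q j + α : ℝ) : EReal) := by
              exact add_le_add_right (EReal.coe_le_coe_iff.2 (by linarith [hxq j])) _
          _ = (a i₁ j + ((q j : ℝ) : EReal)) + ((α : ℝ) : EReal) := by
              rw [EReal.coe_add, add_assoc]
          _ ≤ S i₁ + ((α : ℝ) : EReal) :=
              add_le_add_left (le_iSup (fun j => a i₁ j + ((q j : ℝ) : EReal)) j) _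
          _ = ((s + α : ℝ) : EReal) := by rw [hs, ← EReal.coe_add]
      have hA₁le : A₁ ≤ s + α := by
        rw [hA₁] at hub
        exact_mod_cast hub
      rw [hρ, hA₁, ← EReal.coe_sub]
      exact EReal.coe_le_coe_iff.2 (by linarith [hδeq])
  have h3 : tropObj m n a p q x = Δ := by
    unfold tropObj
    rw [h1, hT, hδ, ← EReal.coe_add]
    exact EReal.coe_eq_coe_iff.2 (by ring)
  exact ⟨h1, h2, h3⟩
end
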